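/- For an odd integer t = 2s+1 ≥ 3, write P_t^L := P_{s+1}. Then for every word v over {L,R}, every n ∈ ℕ, and every d ∈ ℤ: P_{vRL^n}(d) = (1/2)^{n+1}·P_{h(v)}^L(d+n+1) + Σ_{i=1−n}^{1} (1/2)^{2−i}·P_v(d−i), where vRL^n denotes the word v followed by one letter R and then n letters L. -/

import Mathlib

/-- The probability mass functions `P t` on ℤ, defined by
`P 1 = δ₀`, `P (2t) = P t`, `P (2t+1) d = ½ P (t+1) (d+1) + ½ P t (d-1)`. -/
noncomputable def P : ℕ → ℤ → ℝ
  | 0, _ => 0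
  | 1, d => if d = 0 then 1 else 0
  | (n+2), d =>
      if h : (n + 2) % 2 = 0 then P ((n+2)/2) d
      else (1/2) * P ((n+2)/2 + 1) (d+1) + (1/2) * P ((n+2)/2) (d-1)
  decreasing_by all_goals omega

/-- Letters of the alphabet. -/
inductive LR | L | R
deriving DecidableEq

/-- One step of the identification of words with odd integers: `L : t ↦ 2t-1`, `R : t ↦ 2t+1`. -/
def LRstep (t : ℕ) : LR → ℕ
  | LR.L => 2 * t - 1
  | LR.R => 2 * t + 1

/-- The odd integer associated to a word over `{L,R}`, starting from 3. -/
def hword (w : List LR) : ℕ := w.foldl LRstep 3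

lemma P_two_mul (m : ℕ) (d : ℤ) : P (2 * m) d = P m d := by
  match m with
  | 0 => rfl
  | k + 1 =>
    show P (2 * k + 2) d = P (k+1) d
    rw [P, dif_pos (by omega : (2 * k + 2) % 2 = 0),
      (by omega : (2 * k + 2) / 2 = k + 1)]

lemma P_odd (m : ℕ) (hm : 1 ≤ m) (d : ℤ) :
    P (2 * m + 1) d = (1/2) * P (m + 1) (d + 1) + (1/2) * P m (d - 1) := by
  obtain ⟨k, rfl⟩ : ∃ k, m = k + 1 := ⟨m - 1, by omega⟩
  show P (2 * k + 3) d = _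
  rw [show 2 * k + 3 = (2 * k + 1) + 2 by ring, P,
    dif_neg (by omega : ¬ (2 * k + 1 + 2) % 2 = 0),
    (by omega : (2 * k + 1 + 2) / 2 = k + 1)]

lemma P_pow_two_mul (k m : ℕ) (d : ℤ) : P (2 ^ k * m) d = P m d := by
  induction k with
  | zero => simp
  | succ k ih =>
    rw [show 2 ^ (k+1) * m = 2 * (2 ^ k * m) by ring, P_two_mul, ih]

lemma foldl_facts (w : List LR) : ∀ (t : ℕ), t % 2 = 1 → 3 ≤ t →
    (List.foldl LRstep t w) % 2 = 1 ∧ 3 ≤ List.foldl LRstep t w := by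
  induction w with
  | nil => intro t h1 h2; exact ⟨h1, h2⟩
  | cons a w ih =>
    intro t h1 h2
    rw [List.foldl_cons]
    cases a <;> exact ih _ (by simp [LRstep] <;> omega) (by simp [LRstep]; omega)

lemma hword_facts (w : List LR) : hword w % 2 = 1 ∧ 3 ≤ hword w :=
  foldl_facts w 3 (by norm_num) (by norm_num)

lemma foldl_replicate_L (n : ℕ) (u : ℕ) (hu : 1 ≤ u) :
    List.foldl LRstep u (List.replicate n LR.L) = 2 ^ n * (u - 1) + 1 := by
  induction n generalizing u with
  | zero => simp; omega
  | succ n ih =>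
    rw [List.replicate_succ, List.foldl_cons]
    show List.foldl LRstep (2 * u - 1) (List.replicate n LR.L) = _
    rw [ih (2 * u - 1) (by omega), (by omega : 2 * u - 1 - 1 = 2 * (u - 1))]
    ring

lemma hword_append (v : List LR) (n : ℕ) :
    hword (v ++ LR.R :: List.replicate n LR.L) = 2 ^ (n + 1) * hword v + 1 := by
  obtain ⟨-, h3⟩ := hword_facts v
  unfold hword at *
  rw [List.foldl_append, List.foldl_cons]
  show List.foldl LRstep (2 * List.foldl LRstep 3 v + 1) (List.replicate n LR.L) = _
  rw [foldl_replicate_L _ _ (by omega),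
    (by omega : 2 * List.foldl LRstep 3 v + 1 - 1 = 2 * List.foldl LRstep 3 v)]
  ring

lemma main_aux (n : ℕ) (t : ℕ) (ht : t % 2 = 1) (h3 : 3 ≤ t) (d : ℤ) :
    P (2 ^ (n + 1) * t + 1) d
      = (1/2 : ℝ) ^ (n + 1) * P (t / 2 + 1) (d + (n : ℤ) + 1)
        + ∑ k ∈ Finset.range (n + 1), (1/2 : ℝ) ^ (k + 1) * P t (d + (k : ℤ) - 1) := by
  induction n generalizing d with
  | zero =>
    rw [show 2 ^ (0 + 1) * t + 1 = 2 * t + 1 by ring, P_odd t (by omega),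
      show t + 1 = 2 * (t / 2 + 1) by omega, P_two_mul]
    simp
  | succ n ih =>
    have hpos : 1 ≤ 2 ^ (n + 1) * t := Nat.one_le_iff_ne_zero.mpr (by positivity)
    rw [show 2 ^ (n + 1 + 1) * t + 1 = 2 * (2 ^ (n + 1) * t) + 1 by ring,
      P_odd _ hpos, ih (d + 1), P_pow_two_mul]
    rw [Finset.sum_range_succ' (fun k => (1/2 : ℝ) ^ (k + 1) * P t (d + (k : ℤ) - 1)) (n+1)]
    have hX : d + 1 + (n : ℤ) + 1 = d + ((n : ℕ) + 1 : ℕ) + 1 := by push_cast; ring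
    rw [hX, mul_add, Finset.mul_sum]
    rw [Finset.sum_congr rfl (fun k _ => by
      rw [show d + ((k : ℕ) + 1 : ℕ) - 1 = d + 1 + (k : ℤ) - 1 by push_cast; ring]
      ring : ∀ k ∈ Finset.range (n+1),
        (1/2 : ℝ) ^ (k + 1 + 1) * P t (d + ((k : ℕ) + 1 : ℕ) - 1)
          = 1/2 * ((1/2 : ℝ) ^ (k + 1) * P t (d + 1 + (k : ℤ) - 1)))]
    rw [show d + ((0 : ℕ) : ℤ) - 1 = d - 1 by push_cast; ring]
    ring

lemma Icc_sum_eq (n : ℕ) (f : ℤ → ℝ) :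
    ∑ i ∈ Finset.Icc (1 - (n : ℤ)) 1, f i
      = ∑ k ∈ Finset.range (n + 1), f (1 - (k : ℤ)) := by
  induction n with
  | zero => simp
  | succ n ih =>
    have hins : Finset.Icc (1 - ((n : ℤ) + 1)) 1
        = insert (-(n : ℤ)) (Finset.Icc (1 - (n : ℤ)) 1) := by
      ext i
      simp only [Finset.mem_Icc, Finset.mem_insert]
      omega
    rw [show (((n : ℕ) + 1 : ℕ) : ℤ) = (n : ℤ) + 1 by push_cast; ring, hins,
      Finset.sum_insert (by simp [Finset.mem_Icc]), ih]
    conv_rhs => rw [Finset.sum_range_succ]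
    rw [show (1 : ℤ) - ((n + 1 : ℕ) : ℤ) = -(n : ℤ) by push_cast; ring]
    ring

/-- For the odd integer `t = 2s+1 ≥ 3`, the left component is `P_t^L := P_{s+1}`;
since `h(v) = 2s+1` with `s = h(v)/2`, we have `P_{h(v)}^L = P (h(v)/2 + 1)`.
The iteration formula:
`P_{vRL^n}(d) = (1/2)^(n+1) P^L_{h(v)}(d+n+1) + ∑_{i=1-n}^{1} (1/2)^(2-i) P_v(d-i)`. -/
theorem P_append_R_Ln (v : List LR) (n : ℕ) (d : ℤ) :
    P (hword (v ++ LR.R :: List.replicate n LR.L)) d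
      = (1/2 : ℝ) ^ (n + 1) * P (hword v / 2 + 1) (d + (n : ℤ) + 1)
        + ∑ i ∈ Finset.Icc (1 - (n : ℤ)) 1, (1/2 : ℝ) ^ (2 - i) * P (hword v) (d - i) := by
  obtain ⟨ht, h3⟩ := hword_facts v
  rw [hword_append, main_aux n (hword v) ht h3 d, Icc_sum_eq]
  congr 1
  apply Finset.sum_congr rfl
  intro k _
  rw [show d - (1 - (k : ℤ)) = d + (k : ℤ) - 1 by ring,
    show (2 : ℤ) - (1 - (k : ℤ)) = ((k + 1 : ℕ) : ℤ) by push_cast; ring,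
    zpow_natCast]
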